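/- For 0 ≤ m ≤ n, the shifted spine 𝕊ₘⁿ := 𝕊₀^{n−m}∘θ_m satisfies π(𝕊ₘⁿ) = ℍ(n) − min_{k=m,…,n} ℍ(k), i.e., the height of the shifted spine is the Skorokhod-type reflection of the chronological height process. -/

import Mathlib

open scoped Classical NNReal
noncomputable section

/-- Finite point measures on `(0,∞)`, modeled as multisets of atoms in `ℝ≥0`. -/
abbrev PtM := Multiset ℝ≥0

/-- A stick: a life-length together with a finite point measure of birth times. -/
abbrev Stick := ℝ≥0 × PtM

/-- The space of doubly infinite sequences of sticks. -/
abbrev Om := ℤ → Stick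

/-- The shift operator `θ_n`. -/
def theta (n : ℤ) (ω : Om) : Om := fun k => ω (n + k)

/-- The dual (time-reversal) operator `ϑ^n`. -/
def dual (n : ℤ) (ω : Om) : Om := fun k => ω (n - k - 1)

/-- Life length of the `k`-th individual. -/
def Vc (ω : Om) (k : ℤ) : ℝ≥0 := (ω k).1

/-- Point measure (ages at childbearing) of the `k`-th individual. -/
def Pc (ω : Om) (k : ℤ) : PtM := (ω k).2

/-- The Lukasiewicz path `S`. -/
def Sw (ω : Om) (n : ℤ) : ℤ :=
  if 0 ≤ n then ∑ k ∈ Finset.range n.toNat, ((Multiset.card (Pc ω (k : ℤ)) : ℤ) - 1)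
  else - ∑ k ∈ Finset.range (-n).toNat, ((Multiset.card (Pc ω (-(k : ℤ) - 1)) : ℤ) - 1)

/-- `π(ν)`: the supremum of the support (largest atom) of a finite point measure. -/
def piM (ν : PtM) : ℝ≥0 := ν.sup

/-- `Υ_j(ν)`: removes the `j` largest atoms of `ν`. -/
def upsilon (j : ℕ) (ν : PtM) : PtM :=
  ((ν.sort (· ≤ ·)).take (Multiset.card ν - j) : List ℝ≥0)

/-- The map `Φ` driving the spine process dynamics. -/
def phiSp (Y : List PtM) (ν : PtM) : List PtM :=
  if ν = 0 then
    match Y.reverse.dropWhile (fun m => decide (Multiset.card m < 2)) with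
    | [] => []
    | h :: t => (upsilon 1 h :: t).reverse
  else Y ++ [ν]

/-- The spine process `𝕊₀ⁿ`. -/
def spine (ω : Om) : ℕ → List PtM
  | 0 => []
  | n + 1 => phiSp (spine ω n) (Pc ω (n : ℤ))

/-- `π` extended to finite sequences of point measures. -/
def piL (Y : List PtM) : ℝ≥0 := (Y.map piM).sum

/-- The chronological height process `ℍ(n) = π(𝕊₀ⁿ)`. -/
def Hchr (ω : Om) (n : ℕ) : ℝ≥0 := piL (spine ω n)

/-- The genealogical height process
`𝓗(n) = #{k ∈ {0,…,n−1} : S(k+1) ≤ min_{k+1 ≤ j ≤ n} S(j)}`. -/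
def genH (ω : Om) (n : ℕ) : ℕ :=
  ((Finset.range n).filter
    (fun k : ℕ => ∀ j : ℕ, j ∈ Finset.Icc (k + 1) n → Sw ω ((k : ℤ) + 1) ≤ Sw ω (j : ℤ))).card

/-- Weak ascending ladder height times `T(k)` (valued `⊤` if nonexistent). -/
def ladderT (ω : Om) : ℕ → ℕ∞
  | 0 => 0
  | k + 1 => sInf {x : ℕ∞ | ∃ m j : ℕ, x = (m : ℕ∞) ∧ ladderT ω k = (j : ℕ∞) ∧
      j < m ∧ Sw ω (j : ℤ) ≤ Sw ω (m : ℤ)}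

/-- `T^{-1}(n) = min{k ≥ 0 : T(k) ≥ n}`. -/
def Tinv (ω : Om) (n : ℕ) : ℕ := sInf {k : ℕ | (n : ℕ∞) ≤ ladderT ω k}

/-- `T̃^{-1}(n) = max{k ≥ 0 : T(k) ≤ n}`. -/
def tildeTinv (ω : Om) (n : ℕ) : ℕ := sSup {k : ℕ | ladderT ω k ≤ (n : ℕ∞)}

/-- First passage time upward `τ_ℓ = inf{k > 0 : S(k) ≥ ℓ}`. -/
def tauUp (ω : Om) (ℓ : ℤ) : ℕ∞ :=
  sInf {x : ℕ∞ | ∃ k : ℕ, x = (k : ℕ∞) ∧ 0 < k ∧ ℓ ≤ Sw ω (k : ℤ)}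

/-- First hitting time downward `τ⁻_ℓ = inf{k ≥ 0 : S(k) = −ℓ}`. -/
def tauDown (ω : Om) (ℓ : ℤ) : ℕ∞ :=
  sInf {x : ℕ∞ | ∃ k : ℕ, x = (k : ℕ∞) ∧ Sw ω (k : ℤ) = -ℓ}

/-- `τ_ℓ` as a natural number (junk value `0` when infinite). -/
def tauUpN (ω : Om) (ℓ : ℤ) : ℕ := (tauUp ω ℓ).toNat

/-- The undershoot `ζ_ℓ = ℓ − S(τ_ℓ − 1)`. -/
def zetaU (ω : Om) (ℓ : ℤ) : ℤ := ℓ - Sw ω ((tauUpN ω ℓ : ℤ) - 1)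

/-- `μ_ℓ = Υ_{ζ_ℓ}(𝒫_{τ_ℓ − 1})`. -/
def muU (ω : Om) (ℓ : ℤ) : PtM := upsilon (zetaU ω ℓ).toNat (Pc ω ((tauUpN ω ℓ : ℤ) - 1))

/-- `𝒬(k) = μ₀ ∘ θ_{T(k−1)}`. -/
def Qcal (ω : Om) (k : ℕ) : PtM := muU (theta ((ladderT ω (k - 1)).toNat : ℤ) ω) 0

/-- `𝕐(k) = π(𝒬(k))`. -/
def Ybb (ω : Om) (k : ℕ) : ℝ≥0 := piM (Qcal ω k)

/-- The backward maximum `L(m) = max_{0 ≤ k ≤ m} S(−k)`. -/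
def Lmax (ω : Om) (m : ℕ) : ℤ :=
  Finset.sup' (Finset.range (m + 1)) Finset.nonempty_range_add_one (fun k => Sw ω (-(k : ℤ)))

/-- The ancestor set `𝒜(n) = {n − T(k)∘ϑ^n : k ≥ 0}` (only finite ladder times). -/
def Aset (ω : Om) (n : ℕ) : Set ℤ :=
  {a | ∃ k j : ℕ, ladderT (dual (n : ℤ) ω) k = (j : ℕ∞) ∧ a = (n : ℤ) - (j : ℤ)}

/-- `mrca(m,n) = max(𝒜(m) ∩ 𝒜(n))`. -/
def mrcaZ (ω : Om) (m n : ℕ) : ℤ := sSup (Aset ω m ∩ Aset ω n)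

/-- `χ(m,k) = inf{j ≥ m+1 : S(j) = S(m+1) − k}`. -/
def chiT (ω : Om) (m k : ℕ) : ℕ∞ :=
  sInf {x : ℕ∞ | ∃ j : ℕ, x = (j : ℕ∞) ∧ m + 1 ≤ j ∧
    Sw ω (j : ℤ) = Sw ω ((m : ℤ) + 1) - (k : ℤ)}

/-- `χ(m) = inf{j ≥ m+1 : S(j) = S(m) − 1}`. -/
def chiF (ω : Om) (m : ℕ) : ℕ∞ :=
  sInf {x : ℕ∞ | ∃ j : ℕ, x = (j : ℕ∞) ∧ m + 1 ≤ j ∧ Sw ω (j : ℤ) = Sw ω (m : ℤ) - 1}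

/-- The functional `D_ℓ(𝕊₀^m)` of the spine, expressed through the dual walk:
`D_ℓ = (Σ_{i : 0 < T(i) ≤ min(τ_ℓ, m)} 𝕐(i) − 1_{τ_ℓ ≤ m} π(μ_ℓ)) ∘ ϑ^m`, with `D_0 ≡ 0`. -/
def Dfun (ω : Om) (m : ℕ) (ℓ : ℤ) : ℝ :=
  if ℓ < 1 then 0 else
    (∑ i ∈ (Finset.Icc 1 m).filter
        (fun i => 0 < ladderT (dual (m : ℤ) ω) i ∧
          ladderT (dual (m : ℤ) ω) i ≤ min (tauUp (dual (m : ℤ) ω) ℓ) (m : ℕ∞)),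
      (Ybb (dual (m : ℤ) ω) i : ℝ))
    - (if tauUp (dual (m : ℤ) ω) ℓ ≤ (m : ℕ∞) then (piM (muU (dual (m : ℤ) ω) ℓ) : ℝ) else 0)

/-- `K_j = 2𝒱(j−1) − ℍ(j)`. -/
def Kt (ω : Om) (j : ℕ) : ℝ := 2 * ∑ k ∈ Finset.range j, (Vc ω (k : ℤ) : ℝ) - (Hchr ω j : ℝ)

/-- The chronological contour process: on `[K_n, K_{n+1}]` it increases at rate `+1` from
`ℍ(n)` up to `ℍ(n) + V_n` and then decreases at rate `−1` down to `ℍ(n+1)`. -/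
def contour (ω : Om) (t : ℝ) : ℝ :=
  let n := sSup {j : ℕ | Kt ω j ≤ t}
  min ((Hchr ω n : ℝ) + (t - Kt ω n)) ((Hchr ω (n + 1) : ℝ) + (Kt ω (n + 1) - t))



/-! ### Auxiliary lemmas for `stmt14` -/

lemma piL_nil' : piL [] = 0 := rfl

lemma piL_cons' (a : PtM) (l : List PtM) : piL (a :: l) = piM a + piL l := by
  simp [piL]

lemma piL_append' (Y Z : List PtM) : piL (Y ++ Z) = piL Y + piL Z := by
  simp [piL]

lemma piL_reverse' (Y : List PtM) : piL Y.reverse = piL Y := by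
  simp [piL, List.sum_reverse]

lemma piM_upsilon_le' (j : ℕ) (ν : PtM) : piM (upsilon j ν) ≤ piM ν := by
  unfold piM upsilon
  refine Multiset.sup_le.2 fun a ha => ?_
  rw [Multiset.mem_coe] at ha
  exact Multiset.le_sup ((Multiset.mem_sort (· ≤ ·)).1 (List.mem_of_mem_take ha))

lemma phiSp_push (Y : List PtM) {ν : PtM} (hν : ν ≠ 0) :
    phiSp Y ν = Y ++ [ν] := by
  unfold phiSp; rw [if_neg hν]

/-- non-exhausting pop -/
lemma phiSp_zero_append (C X : List PtM)
    (h : X.reverse.dropWhile (fun m => decide (Multiset.card m < 2)) ≠ []) :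
    phiSp (C ++ X) 0 = C ++ phiSp X 0 := by
  unfold phiSp
  rw [if_pos rfl, if_pos rfl, List.reverse_append, List.dropWhile_append]
  cases hd : X.reverse.dropWhile (fun m => decide (Multiset.card m < 2)) with
  | nil => exact absurd hd h
  | cons a t =>
    simp [List.reverse_append]

/-- exhausting pop -/
lemma phiSp_zero_append_exhaust (C X : List PtM)
    (h : X.reverse.dropWhile (fun m => decide (Multiset.card m < 2)) = []) :
    phiSp (C ++ X) 0 = phiSp C 0 := by
  unfold phiSp
  rw [if_pos rfl, if_pos rfl, List.reverse_append, List.dropWhile_append, h]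
  simp

lemma phiSp_zero_exhaust (X : List PtM)
    (h : X.reverse.dropWhile (fun m => decide (Multiset.card m < 2)) = []) :
    phiSp X 0 = [] := by
  unfold phiSp
  rw [if_pos rfl, h]

lemma piL_phiSp_zero_le (Y : List PtM) : piL (phiSp Y 0) ≤ piL Y := by
  unfold phiSp
  rw [if_pos rfl]
  cases hd : Y.reverse.dropWhile (fun m => decide (Multiset.card m < 2)) with
  | nil => simp [piL]
  | cons h t =>
    have hsplit : Y.reverse = Y.reverse.takeWhile (fun m => decide (Multiset.card m < 2))
        ++ (h :: t) := by
      conv_lhs => rw [← List.takeWhile_append_dropWhile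
        (p := fun m => decide (Multiset.card m < 2)) (l := Y.reverse), hd]
    have hY := congrArg piL hsplit
    rw [piL_reverse', piL_append', piL_cons'] at hY
    show piL ((upsilon 1 h :: t).reverse) ≤ piL Y
    rw [piL_reverse', piL_cons', hY]
    calc piM (upsilon 1 h) + piL t ≤ piM h + piL t := by
          exact add_le_add_left (piM_upsilon_le' 1 h) _
      _ ≤ _ := le_add_self

lemma spine_key (ω : Om) (m d : ℕ) :
    ∃ C : List PtM, spine ω (m + d) = C ++ spine (theta (m : ℤ) ω) d ∧
      (piL C : ℝ) = Finset.inf' (Finset.Icc m (m + d))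
        (Finset.nonempty_Icc.2 (Nat.le_add_right m d)) (fun k => (Hchr ω k : ℝ)) := by
  induction d with
  | zero =>
    refine ⟨spine ω m, by simp [spine], ?_⟩
    simp [Hchr]
  | succ d ih =>
    obtain ⟨C, hC, hinf⟩ := ih
    set X := spine (theta (m : ℤ) ω) d with hX
    have hPc : Pc (theta (m : ℤ) ω) ((d : ℕ) : ℤ) = Pc ω (((m + d : ℕ) : ℕ) : ℤ) := by
      simp [Pc, theta]
    have hsp : spine ω (m + (d + 1)) = phiSp (C ++ X) (Pc ω (((m + d : ℕ) : ℕ) : ℤ)) := by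
      show phiSp (spine ω (m + d)) (Pc ω (((m + d : ℕ) : ℕ) : ℤ)) = _
      rw [hC]
    have hspθ : spine (theta (m : ℤ) ω) (d + 1) = phiSp X (Pc ω (((m + d : ℕ) : ℕ) : ℤ)) := by
      show phiSp X (Pc (theta (m : ℤ) ω) ((d : ℕ) : ℤ)) = _
      rw [hPc]
    have hIcc : Finset.Icc m (m + (d + 1)) = insert (m + (d + 1)) (Finset.Icc m (m + d)) := by
      ext x; simp; omega
    have hH : Hchr ω (m + (d + 1)) = piL (spine ω (m + (d + 1))) := rfl
    -- unified conclusion builder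
    have build : ∀ C' X' : List PtM, spine ω (m + (d + 1)) = C' ++ X' →
        spine (theta (m : ℤ) ω) (d + 1) = X' → (piL C' : ℝ) ≤ piL C →
        ((piL C' : ℝ) = Hchr ω (m + (d + 1)) ∨ (C' = C)) →
        ∃ C'' : List PtM, spine ω (m + (d + 1)) = C'' ++ spine (theta (m : ℤ) ω) (d + 1) ∧
          (piL C'' : ℝ) = Finset.inf' (Finset.Icc m (m + (d + 1)))
            (Finset.nonempty_Icc.2 (Nat.le_add_right m (d + 1))) (fun k => (Hchr ω k : ℝ)) := by
      intro C' X' h1 h2 hle hcase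
      refine ⟨C', by rw [h1, h2], ?_⟩
      have hHval : (Hchr ω (m + (d + 1)) : ℝ) = (piL C' : ℝ) + (piL X' : ℝ) := by
        rw [hH, h1, piL_append']; push_cast; ring
      have hinf' : Finset.inf' (Finset.Icc m (m + (d + 1)))
            (Finset.nonempty_Icc.2 (Nat.le_add_right m (d + 1))) (fun k => (Hchr ω k : ℝ))
          = min (Hchr ω (m + (d + 1)) : ℝ) (piL C : ℝ) := by
        rw [hinf]
        rw [show (Finset.inf' (Finset.Icc m (m + (d + 1)))
            (Finset.nonempty_Icc.2 (Nat.le_add_right m (d + 1))) (fun k => (Hchr ω k : ℝ)))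
          = (insert (m + (d + 1)) (Finset.Icc m (m + d))).inf'
              (by rw [← hIcc]; exact Finset.nonempty_Icc.2 (Nat.le_add_right m (d + 1)))
              (fun k => (Hchr ω k : ℝ)) from by congr 1]
        rw [Finset.inf'_insert]
      rw [hinf']
      rcases hcase with hc | hc
      · rw [min_eq_left (by rw [← hc]; exact hle), hc]
      · subst hc
        refine (min_eq_right ?_).symm
        rw [hHval]
        have : (0 : ℝ) ≤ (piL X' : ℝ) := (piL X').coe_nonneg
        linarith
    by_cases hν : Pc ω (((m + d : ℕ) : ℕ) : ℤ) = 0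
    · rw [hν] at hsp hspθ
      by_cases hdw : X.reverse.dropWhile (fun m => decide (Multiset.card m < 2)) = []
      · -- exhausting pop
        refine build (phiSp C 0) [] ?_ ?_ ?_ ?_
        · rw [hsp, phiSp_zero_append_exhaust C X hdw, List.append_nil]
        · rw [hspθ, phiSp_zero_exhaust X hdw]
        · exact_mod_cast piL_phiSp_zero_le C
        · left
          rw [hH, hsp, phiSp_zero_append_exhaust C X hdw]
      · -- non-exhausting pop
        refine build C (phiSp X 0) ?_ ?_ le_rfl (Or.inr rfl)
        · rw [hsp, phiSp_zero_append C X hdw]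
        · exact hspθ
    · -- push
      refine build C (X ++ [Pc ω (((m + d : ℕ) : ℕ) : ℤ)]) ?_ ?_ le_rfl (Or.inr rfl)
      · rw [hsp, phiSp_push _ hν, List.append_assoc]
      · rw [hspθ, phiSp_push _ hν]

theorem stmt14 (ω : Om) (m n : ℕ) (hmn : m ≤ n) :
    (piL (spine (theta (m : ℤ) ω) (n - m)) : ℝ)
      = (Hchr ω n : ℝ) -
        Finset.inf' (Finset.Icc m n) (Finset.nonempty_Icc.2 hmn) (fun k => (Hchr ω k : ℝ)) := by
  obtain ⟨C, hC, hinf⟩ := spine_key ω m (n - m)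
  simp only [Nat.add_sub_cancel' hmn] at hC hinf
  have : (Hchr ω n : ℝ) = (piL C : ℝ) + (piL (spine (theta (m : ℤ) ω) (n - m)) : ℝ) := by
    show (piL (spine ω n) : ℝ) = _
    rw [hC, piL_append']; push_cast; ring
  rw [← hinf]
  linarith

end
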